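/- For a graph G on n vertices, the number of independent sets of size k in G equals the coefficient of the monomial symmetric function m_{(k,1^{n-k})} in the chromatic symmetric function X_G, divided by (n-k)!. In particular, the independence polynomial of G is determined by X_G. -/

import Mathlib

open Classical in
/-- The chromatic symmetric function of a graph `G`, in `N` variables: the sum over all proper
colorings `κ : V → Fin N` of the monomials `∏ v, x_{κ v}`. -/
noncomputable def csf {V : Type} [Fintype V] (G : SimpleGraph V) (N : ℕ) :
    MvPolynomial (Fin N) ℚ :=
  ∑ κ ∈ Finset.univ.filter (fun κ : V → Fin N => ∀ u v, G.Adj u v → κ u ≠ κ v),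
    ∏ v, MvPolynomial.X (κ v)

open Finset MvPolynomial in
private lemma prod_X_eq (n : ℕ) (κ : Fin n → Fin n) :
    (∏ v, (X (κ v) : MvPolynomial (Fin n) ℚ)) = monomial (∑ v, Finsupp.single (κ v) 1) 1 := by
  classical
  induction (Finset.univ : Finset (Fin n)) using Finset.induction with
  | empty => simp [monomial_zero']
  | @insert a s h ih =>
      rw [Finset.prod_insert h, Finset.sum_insert h, ih, X, monomial_mul, one_mul]

open Finset MvPolynomial in
open Classical in
private lemma coeff_csf (n : ℕ) (G : SimpleGraph (Fin n)) (d : Fin n →₀ ℕ) :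
    coeff d (csf G n) =
      ((Finset.univ.filter (fun κ : Fin n → Fin n =>
        (∀ u v, G.Adj u v → κ u ≠ κ v) ∧ ∑ v, Finsupp.single (κ v) 1 = d)).card : ℚ) := by
  classical
  rw [csf, coeff_sum]
  simp only [prod_X_eq, coeff_monomial]
  rw [Finset.sum_boole, Finset.filter_filter]
  norm_cast
  exact Finset.card_nbij id (by intro a ha; simpa using ha) (fun a ha b hb h => h) (by intro a ha; exact ⟨a, by simpa using ha, rfl⟩)

open Finset in
open Classical in
lemma fiber_card (n k : ℕ) (hk : 2 ≤ k) (hkn : k ≤ n) (G : SimpleGraph (Fin n))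
    (S : Finset (Fin n)) (hScard : S.card = k) (hSind : ∀ u ∈ S, ∀ v ∈ S, ¬ G.Adj u v) :
    ((Finset.univ.filter (fun κ : Fin n → Fin n =>
        ((∀ u v, G.Adj u v → κ u ≠ κ v) ∧
        ∀ c : Fin n, (univ.filter fun v => κ v = c).card =
          (if (c : ℕ) = 0 then k else if (c : ℕ) ≤ n - k then 1 else 0)) ∧
        univ.filter (fun v => κ v = ⟨0, by omega⟩) = S)).card) = Nat.factorial (n - k) := by
  classical
  have hn : 0 < n := by omega
  set z : Fin n := ⟨0, by omega⟩ with hz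
  set T : Finset (Fin n) := univ.filter (fun c : Fin n => (c : ℕ) ≠ 0 ∧ (c : ℕ) ≤ n - k) with hTdef
  have hT : T.card = n - k := by
    rw [← Finset.card_range (n - k)]
    rw [hTdef]
    apply Finset.card_nbij' (i := fun c : Fin n => (c : ℕ) - 1)
      (j := fun m : ℕ => if h : m + 1 < n then (⟨m + 1, h⟩ : Fin n) else z)
    · intro c hc
      simp only [mem_coe, mem_filter, mem_univ, true_and] at hc
      simp only [mem_coe, mem_range]
      omega
    · intro m hm
      simp only [mem_coe, mem_range] at hm
      have h1 : m + 1 < n := by omega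
      simp only [mem_coe, mem_filter, mem_univ, true_and, dif_pos h1]
      exact ⟨by omega, by omega⟩
    · intro c hc
      simp only [mem_coe, mem_filter, mem_univ, true_and] at hc
      have h1 : (c : ℕ) - 1 + 1 < n := by omega
      simp only [dif_pos h1]
      apply Fin.ext
      simp
      omega
    · intro m hm
      simp only [mem_coe, mem_range] at hm
      have h1 : m + 1 < n := by omega
      simp [dif_pos h1]
  have hSc : (Sᶜ : Finset (Fin n)).card = n - k := by
    rw [Finset.card_compl, Fintype.card_fin, hScard]
  have hcard : Fintype.card ({x // x ∈ Sᶜ} ↪ {x // x ∈ T}) = Nat.factorial (n - k) := by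
    rw [Fintype.card_embedding_eq, Fintype.card_coe, Fintype.card_coe, hT, hSc,
      Nat.descFactorial_self]
  -- helper facts about members of the fiber
  have hmem : ∀ κ : Fin n → Fin n,
      (∀ c : Fin n, (univ.filter fun v => κ v = c).card =
        (if (c : ℕ) = 0 then k else if (c : ℕ) ≤ n - k then 1 else 0)) →
      univ.filter (fun v => κ v = z) = S → ∀ v : Fin n, v ∉ S → κ v ∈ T := by
    intro κ hsz hfib v hv
    have h0 : (κ v : ℕ) ≠ 0 := by
      intro h0
      have : κ v = z := Fin.ext h0
      exact hv (hfib ▸ (Finset.mem_filter.2 ⟨Finset.mem_univ v, this⟩))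
    have hle : (κ v : ℕ) ≤ n - k := by
      by_contra hgt
      have := hsz (κ v)
      rw [if_neg h0, if_neg hgt] at this
      have hvmem : v ∈ univ.filter fun w => κ w = κ v :=
        Finset.mem_filter.2 ⟨Finset.mem_univ v, rfl⟩
      rw [Finset.card_eq_zero] at this
      simp [this] at hvmem
    exact Finset.mem_filter.2 ⟨Finset.mem_univ _, h0, hle⟩
  have hinj : ∀ κ : Fin n → Fin n,
      (∀ c : Fin n, (univ.filter fun v => κ v = c).card =
        (if (c : ℕ) = 0 then k else if (c : ℕ) ≤ n - k then 1 else 0)) →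
      univ.filter (fun v => κ v = z) = S →
      ∀ u v : Fin n, u ∉ S → v ∉ S → κ u = κ v → u = v := by
    intro κ hsz hfib u v hu hv huv
    have hT1 := hmem κ hsz hfib u hu
    simp only [hTdef, Finset.mem_filter, Finset.mem_univ, true_and] at hT1
    have h1 : (univ.filter fun w => κ w = κ u).card = 1 := by
      rw [hsz (κ u), if_neg hT1.1, if_pos hT1.2]
    rw [Finset.card_eq_one] at h1
    obtain ⟨a, ha⟩ := h1
    have hu' : u ∈ univ.filter fun w => κ w = κ u :=
      Finset.mem_filter.2 ⟨Finset.mem_univ _, rfl⟩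
    have hv' : v ∈ univ.filter fun w => κ w = κ u :=
      Finset.mem_filter.2 ⟨Finset.mem_univ _, huv.symm⟩
    rw [ha, Finset.mem_singleton] at hu' hv'
    rw [hu', hv']
  -- membership of the inverse construction
  have hjmem : ∀ f : {x // x ∈ Sᶜ} ↪ {x // x ∈ T},
      (fun v : Fin n => if h : v ∈ S then z else
        (f ⟨v, Finset.mem_compl.2 h⟩ : Fin n)) ∈
      Finset.univ.filter (fun κ : Fin n → Fin n =>
        ((∀ u v, G.Adj u v → κ u ≠ κ v) ∧
        ∀ c : Fin n, (univ.filter fun v => κ v = c).card =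
          (if (c : ℕ) = 0 then k else if (c : ℕ) ≤ n - k then 1 else 0)) ∧
        univ.filter (fun v => κ v = z) = S) := by
    intro f
    set κ : Fin n → Fin n := fun v => if h : v ∈ S then z else
      (f ⟨v, Finset.mem_compl.2 h⟩ : Fin n) with hκdef
    have hfT : ∀ x : {x // x ∈ Sᶜ}, ((f x : Fin n) : ℕ) ≠ 0 ∧ ((f x : Fin n) : ℕ) ≤ n - k := by
      intro x
      have := (f x).2
      simp only [hTdef, Finset.mem_filter, Finset.mem_univ, true_and] at this
      exact this
    have hbij : Function.Bijective f :=
      (Fintype.bijective_iff_injective_and_card f).2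
        ⟨f.injective, by rw [Fintype.card_coe, Fintype.card_coe, hT, hSc]⟩
    have hfibz : univ.filter (fun v => κ v = z) = S := by
      ext v
      simp only [Finset.mem_filter, Finset.mem_univ, true_and, hκdef]
      constructor
      · intro hv
        by_contra hvS
        rw [dif_neg hvS] at hv
        exact (hfT ⟨v, Finset.mem_compl.2 hvS⟩).1 (by rw [hv])
      · intro hv; rw [dif_pos hv]
    have hsz : ∀ c : Fin n, (univ.filter fun v => κ v = c).card =
        (if (c : ℕ) = 0 then k else if (c : ℕ) ≤ n - k then 1 else 0) := by
      intro c
      by_cases hc0 : (c : ℕ) = 0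
      · have : c = z := Fin.ext hc0
        rw [this, hfibz]
        simp [hScard, hz]
      · by_cases hcle : (c : ℕ) ≤ n - k
        · rw [if_neg hc0, if_pos hcle]
          obtain ⟨w, hw⟩ := hbij.surjective ⟨c, Finset.mem_filter.2
            ⟨Finset.mem_univ _, hc0, hcle⟩⟩
          have : univ.filter (fun v => κ v = c) = {(w : Fin n)} := by
            ext v
            simp only [Finset.mem_filter, Finset.mem_univ, true_and,
              Finset.mem_singleton, hκdef]
            constructor
            · intro hv
              by_cases hvS : v ∈ S
              · rw [dif_pos hvS] at hv
                exact absurd (hv ▸ hc0) (by simp [← hv, hz])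
              · rw [dif_neg hvS] at hv
                have h2 : f ⟨v, Finset.mem_compl.2 hvS⟩ = f w :=
                  Subtype.ext (hv.trans (congrArg Subtype.val hw).symm)
                exact congrArg Subtype.val (f.injective h2)
            · intro hv
              subst hv
              have hwS : (w : Fin n) ∉ S := Finset.mem_compl.1 w.2
              rw [dif_neg hwS]
              have : (⟨(w : Fin n), Finset.mem_compl.2 hwS⟩ : {x // x ∈ Sᶜ}) = w :=
                Subtype.ext rfl
              rw [this, hw]
          rw [this, Finset.card_singleton]
        · rw [if_neg hc0, if_neg hcle, Finset.card_eq_zero]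
          ext v
          simp only [Finset.mem_filter, Finset.mem_univ, true_and, hκdef,
            Finset.notMem_empty, iff_false]
          intro hv
          by_cases hvS : v ∈ S
          · rw [dif_pos hvS] at hv
            exact hc0 (by rw [← hv])
          · rw [dif_neg hvS] at hv
            exact hcle (hv ▸ (hfT ⟨v, Finset.mem_compl.2 hvS⟩).2)
    refine Finset.mem_filter.2 ⟨Finset.mem_univ _, ⟨?_, hsz⟩, hfibz⟩
    intro u v hadj heq
    by_cases huS : u ∈ S <;> by_cases hvS : v ∈ S
    · exact hSind u huS v hvS hadj
    · rw [hκdef] at heq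
      simp only [dif_pos huS, dif_neg hvS] at heq
      exact (hfT ⟨v, Finset.mem_compl.2 hvS⟩).1 (by rw [← heq])
    · rw [hκdef] at heq
      simp only [dif_neg huS, dif_pos hvS] at heq
      exact (hfT ⟨u, Finset.mem_compl.2 huS⟩).1 (by rw [heq])
    · rw [hκdef] at heq
      simp only [dif_neg huS, dif_neg hvS] at heq
      have := f.injective (Subtype.ext heq)
      exact G.ne_of_adj hadj (congrArg Subtype.val this)
  rw [← hcard, ← Finset.card_univ]
  refine Finset.card_bij' (fun κ hκ => ⟨fun v =>
      ⟨κ v.1, hmem κ (Finset.mem_filter.1 hκ).2.1.2 (Finset.mem_filter.1 hκ).2.2 v.1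
        (Finset.mem_compl.1 v.2)⟩, ?_⟩)
    (fun f _ => fun v : Fin n => if h : v ∈ S then z else (f ⟨v, Finset.mem_compl.2 h⟩ : Fin n))
    (fun κ hκ => Finset.mem_univ _) (fun f _ => hjmem f) ?_ ?_
  · -- injectivity of the embedding
    intro u v huv
    simp only [Subtype.mk.injEq] at huv
    exact Subtype.ext (hinj κ (Finset.mem_filter.1 hκ).2.1.2 (Finset.mem_filter.1 hκ).2.2
      u.1 v.1 (Finset.mem_compl.1 u.2) (Finset.mem_compl.1 v.2) huv)
  · -- left inverse
    intro κ hκ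
    funext v
    by_cases hvS : v ∈ S
    · rw [dif_pos hvS]
      have := (Finset.mem_filter.1 hκ).2.2
      have hv : v ∈ univ.filter (fun w => κ w = z) := this ▸ hvS
      exact ((Finset.mem_filter.1 hv).2).symm
    · rw [dif_neg hvS]
      rfl
  · -- right inverse
    intro f _
    ext v
    have hvS : (v : Fin n) ∉ S := Finset.mem_compl.1 v.2
    simp [hvS]


open Finset MvPolynomial in
open Classical in
private lemma coeff_csf_eq (n k : ℕ) (hk : 2 ≤ k) (hkn : k ≤ n) (G : SimpleGraph (Fin n)) :
    MvPolynomial.coeff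
        (Finsupp.equivFunOnFinite.symm fun i : Fin n =>
          if (i : ℕ) = 0 then k else if (i : ℕ) ≤ n - k then 1 else 0)
        (csf G n)
      = ((Nat.factorial (n - k) *
          Nat.card {s : Finset (Fin n) // s.card = k ∧ ∀ u ∈ s, ∀ v ∈ s, ¬ G.Adj u v} : ℕ) : ℚ) := by
  classical
  have hn : 0 < n := by omega
  set z : Fin n := ⟨0, hn⟩ with hz
  rw [coeff_csf]
  have happ : ∀ (κ : Fin n → Fin n) (c : Fin n),
      (∑ v, Finsupp.single (κ v) 1) c = (univ.filter fun v => κ v = c).card := by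
    intro κ c
    rw [Finsupp.finset_sum_apply, Finset.card_filter]
    congr 1
    funext v
    simp [Finsupp.single_apply]
  have hset : (Finset.univ.filter (fun κ : Fin n → Fin n =>
        (∀ u v, G.Adj u v → κ u ≠ κ v) ∧ ∑ v, Finsupp.single (κ v) 1 =
          Finsupp.equivFunOnFinite.symm fun i : Fin n =>
            if (i : ℕ) = 0 then k else if (i : ℕ) ≤ n - k then 1 else 0))
      = (Finset.univ.filter (fun κ : Fin n → Fin n =>
        (∀ u v, G.Adj u v → κ u ≠ κ v) ∧
        ∀ c : Fin n, (univ.filter fun v => κ v = c).card =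
          (if (c : ℕ) = 0 then k else if (c : ℕ) ≤ n - k then 1 else 0))) := by
    apply Finset.filter_congr
    intro κ _
    constructor
    · rintro ⟨h1, h2⟩
      refine ⟨h1, fun c => ?_⟩
      rw [← happ, h2]
      simp
    · rintro ⟨h1, h2⟩
      refine ⟨h1, ?_⟩
      ext c
      rw [happ, h2 c]
      simp
  rw [hset]
  have hmap : ∀ κ ∈ (Finset.univ.filter (fun κ : Fin n → Fin n =>
        (∀ u v, G.Adj u v → κ u ≠ κ v) ∧
        ∀ c : Fin n, (univ.filter fun v => κ v = c).card =
          (if (c : ℕ) = 0 then k else if (c : ℕ) ≤ n - k then 1 else 0))),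
      (univ.filter fun v => κ v = z) ∈ (univ.filter (fun s : Finset (Fin n) =>
        s.card = k ∧ ∀ u ∈ s, ∀ v ∈ s, ¬ G.Adj u v)) := by
    intro κ hκ
    obtain ⟨h1, h2⟩ := (Finset.mem_filter.1 hκ).2
    refine Finset.mem_filter.2 ⟨Finset.mem_univ _, ?_, ?_⟩
    · have := h2 z
      simpa [hz] using this
    · intro u hu v hv hadj
      have hu' := (Finset.mem_filter.1 hu).2
      have hv' := (Finset.mem_filter.1 hv).2
      exact h1 u v hadj (hu'.trans hv'.symm)
  rw [Finset.card_eq_sum_card_fiberwise hmap]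
  have hsum : ∀ S ∈ (univ.filter (fun s : Finset (Fin n) =>
        s.card = k ∧ ∀ u ∈ s, ∀ v ∈ s, ¬ G.Adj u v)),
      (((Finset.univ.filter (fun κ : Fin n → Fin n =>
        (∀ u v, G.Adj u v → κ u ≠ κ v) ∧
        ∀ c : Fin n, (univ.filter fun v => κ v = c).card =
          (if (c : ℕ) = 0 then k else if (c : ℕ) ≤ n - k then 1 else 0))).filter
        (fun κ => (univ.filter fun v => κ v = z) = S)).card) = Nat.factorial (n - k) := by
    intro S hS
    obtain ⟨hScard, hSind⟩ := (Finset.mem_filter.1 hS).2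
    rw [Finset.filter_filter]
    exact fiber_card n k hk hkn G S hScard hSind
  rw [Finset.sum_congr rfl hsum, Finset.sum_const, smul_eq_mul]
  have hI : Nat.card {s : Finset (Fin n) // s.card = k ∧ ∀ u ∈ s, ∀ v ∈ s, ¬ G.Adj u v}
      = (univ.filter (fun s : Finset (Fin n) =>
          s.card = k ∧ ∀ u ∈ s, ∀ v ∈ s, ¬ G.Adj u v)).card := by
    rw [Nat.card_eq_fintype_card, Fintype.card_subtype]
  rw [hI]
  push_cast
  ring

theorem indep_sets_from_csf (n k : ℕ) (hk : 2 ≤ k) (hkn : k ≤ n) (G : SimpleGraph (Fin n)) :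
    (MvPolynomial.coeff
        (Finsupp.equivFunOnFinite.symm fun i : Fin n =>
          if (i : ℕ) = 0 then k else if (i : ℕ) ≤ n - k then 1 else 0)
        (csf G n)
      = ((Nat.factorial (n - k) *
          Nat.card {s : Finset (Fin n) // s.card = k ∧ ∀ u ∈ s, ∀ v ∈ s, ¬ G.Adj u v} : ℕ) : ℚ))
    ∧ ∀ G' : SimpleGraph (Fin n), (∀ N : ℕ, csf G N = csf G' N) →
        ∀ j : ℕ,
          Nat.card {s : Finset (Fin n) // s.card = j ∧ ∀ u ∈ s, ∀ v ∈ s, ¬ G.Adj u v}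
            = Nat.card {s : Finset (Fin n) // s.card = j ∧ ∀ u ∈ s, ∀ v ∈ s, ¬ G'.Adj u v} := by
  refine ⟨coeff_csf_eq n k hk hkn G, ?_⟩
  intro G' hcsf j
  by_cases hj : 2 ≤ j ∧ j ≤ n
  · have e1 := coeff_csf_eq n j hj.1 hj.2 G
    have e2 := coeff_csf_eq n j hj.1 hj.2 G'
    rw [hcsf n, e2] at e1
    have : ((Nat.factorial (n - j) *
        Nat.card {s : Finset (Fin n) // s.card = j ∧ ∀ u ∈ s, ∀ v ∈ s, ¬ G.Adj u v} : ℕ) : ℚ)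
        = ((Nat.factorial (n - j) *
        Nat.card {s : Finset (Fin n) // s.card = j ∧ ∀ u ∈ s, ∀ v ∈ s, ¬ G'.Adj u v} : ℕ) : ℚ) := e1.symm
    rw [Nat.cast_inj] at this
    exact Nat.eq_of_mul_eq_mul_left (Nat.factorial_pos (n - j)) this
  · have key : ∀ (H : SimpleGraph (Fin n)) (s : Finset (Fin n)), s.card = j →
        ∀ u ∈ s, ∀ v ∈ s, ¬ H.Adj u v := by
      intro H s hs u hu v hv hadj
      rcases Nat.lt_or_ge j 2 with hj2 | hj2
      · have : u = v := Finset.card_le_one.1 (by omega : s.card ≤ 1) u hu v hv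
        exact H.irrefl (this ▸ hadj)
      · have hjn : n < j := by omega
        have h3 := Finset.card_le_univ s
        rw [Fintype.card_fin] at h3
        omega
    exact Nat.card_congr (Equiv.subtypeEquivRight (fun s =>
      ⟨fun h => ⟨h.1, key G' s h.1⟩, fun h => ⟨h.1, key G s h.1⟩⟩))
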